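/- arXiv:1009.5740 — 2 statements merged into one kernel-verified Lean document; each statement's English description precedes it below -/
import Mathlib

section
/- Let π = a_1a_2⋯a_n ∈ S_n be a separable permutation with a_1 < a_n. Then π = π_A π_B where, for some 1 ≤ m < n, π_A is a permutation of the letters {1,…,m} and π_B is a permutation of the letters {m+1,…,n}, and F(Λ_π, q) = F(Λ_{σ_A}, q) · F(Λ_{σ_B}, q), where σ_A ∈ S_m is π_A and σ_B ∈ S_{n−m} is obtained from π_B by subtracting m from each letter. -/
open Polynomial

namespace SepPerm

/-- The length (number of inversions) of a permutation of `Fin n`. -/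
def invCount {n : ℕ} (π : Equiv.Perm (Fin n)) : ℕ :=
  (Finset.univ.filter fun p : Fin n × Fin n => p.1 < p.2 ∧ π p.2 < π p.1).card

/-- The (right) weak Bruhat order: `u ≤ v` iff `ℓ(u) + ℓ(u⁻¹v) = ℓ(v)`. -/
def wle {n : ℕ} (u v : Equiv.Perm (Fin n)) : Prop :=
  invCount u + invCount (u⁻¹ * v) = invCount v

open scoped Classical in
/-- `F(Λ_π, q) = ∑_{u ≤ π} q^{ℓ(u)}`, rank generating function of `[id, π]`. -/
noncomputable def FLam {n : ℕ} (π : Equiv.Perm (Fin n)) : Polynomial ℤ :=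
  ∑ u ∈ Finset.univ.filter (fun u => wle u π), X ^ invCount u

open scoped Classical in
/-- `F(V_π, q) = ∑_{v ≥ π} q^{ℓ(v) - ℓ(π)}`, rank generating function of `[π, w₀]`. -/
noncomputable def FV {n : ℕ} (π : Equiv.Perm (Fin n)) : Polynomial ℤ :=
  ∑ v ∈ Finset.univ.filter (fun v => wle π v), X ^ (invCount v - invCount π)

/-- A permutation is separable iff it avoids the patterns 3142 and 2413. -/
def IsSeparable {n : ℕ} (π : Equiv.Perm (Fin n)) : Prop :=
  (¬ ∃ i j k h : Fin n, i < j ∧ j < k ∧ k < h ∧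
      π j < π h ∧ π h < π i ∧ π i < π k) ∧
  (¬ ∃ i j k h : Fin n, i < j ∧ j < k ∧ k < h ∧
      π k < π i ∧ π i < π h ∧ π h < π j)

/-- The longest element `w₀ = n, n-1, …, 1`. -/
def w0 (n : ℕ) : Equiv.Perm (Fin n) := Fin.revPerm

/-- The complement `π^c`, with `π^c(i) = n + 1 - π(i)` (one-indexed). -/
def compl {n : ℕ} (π : Equiv.Perm (Fin n)) : Equiv.Perm (Fin n) := w0 n * π

/-- `[k] = 1 + q + ⋯ + q^{k-1}`. -/
noncomputable def qnum (k : ℕ) : Polynomial ℤ := ∑ i ∈ Finset.range k, X ^ i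

/-- `[N]! = [1][2]⋯[N]`. -/
noncomputable def qfact (N : ℕ) : Polynomial ℤ := ∏ k ∈ Finset.range N, qnum (k + 1)

/-- The inversion poset `P_π` on the letters: `x ≤_P y` iff `x ≤ y` and `π⁻¹x ≤ π⁻¹y`. -/
def invLe {n : ℕ} (π : Equiv.Perm (Fin n)) (x y : Fin n) : Prop :=
  x ≤ y ∧ π⁻¹ x ≤ π⁻¹ y

/-- `σ` is a linear extension of the order `r`: whenever `i <_r j`, `i` precedes `j`
in the one-line notation of `σ` (i.e. the position `σ⁻¹ i` comes before `σ⁻¹ j`). -/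
def IsLinExt {N : ℕ} (r : Fin N → Fin N → Prop) (σ : Equiv.Perm (Fin N)) : Prop :=
  ∀ i j, r i j → i ≠ j → σ.symm i < σ.symm j

open scoped Classical in
/-- `F(𝓛(P), q) = ∑_{σ ∈ 𝓛(P)} q^{ℓ(σ)}`, generating function of linear extensions
by number of inversions. -/
noncomputable def FLin {N : ℕ} (r : Fin N → Fin N → Prop) : Polynomial ℤ :=
  ∑ σ ∈ Finset.univ.filter (fun σ => IsLinExt r σ), X ^ invCount σ

open Finset

lemma split_count {n : ℕ} (P Q : Fin n × Fin n → Prop)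
    [DecidablePred P] [DecidablePred Q] :
    (univ.filter fun p => P p).card =
      (univ.filter fun p => P p ∧ Q p).card +
      (univ.filter fun p => P p ∧ ¬ Q p).card := by
  rw [← filter_filter, ← filter_filter, card_filter_add_card_filter_not]

lemma key_count {n : ℕ} (u w : Equiv.Perm (Fin n)) :
    invCount u + invCount w = invCount (u * w) +
      2 * (univ.filter fun p : Fin n × Fin n =>
        p.1 < p.2 ∧ w p.2 < w p.1 ∧ (u * w) p.1 < (u * w) p.2).card := by
  classical
  set v := u * w with hv
  have hvw : ∀ x, v x = u (w x) := fun x => rfl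
  -- step 1: transport invCount u along the pair bijection induced by w
  have step1 : invCount u = (univ.filter fun p : Fin n × Fin n =>
      p.1 < p.2 ∧ ((w p.1 < w p.2 ∧ v p.2 < v p.1) ∨
        (w p.2 < w p.1 ∧ v p.1 < v p.2))).card := by
    rw [invCount]
    apply Finset.card_bij'
      (i := fun q (_ : q ∈ _) =>
        if w⁻¹ q.1 < w⁻¹ q.2 then (w⁻¹ q.1, w⁻¹ q.2) else (w⁻¹ q.2, w⁻¹ q.1))
      (j := fun p (_ : p ∈ _) =>
        if w p.1 < w p.2 then (w p.1, w p.2) else (w p.2, w p.1))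
    · intro q hq
      simp only [mem_filter, mem_univ, true_and] at hq ⊢
      obtain ⟨h12, hu⟩ := hq
      by_cases h : w⁻¹ q.1 < w⁻¹ q.2
      · rw [if_pos h]
        refine ⟨h, Or.inl ⟨?_, ?_⟩⟩
        · simpa using h12
        · simpa [hvw] using hu
      · rw [if_neg h]
        have hne : w⁻¹ q.1 ≠ w⁻¹ q.2 := fun he => h12.ne ((Equiv.injective w⁻¹) he)
        have h' : w⁻¹ q.2 < w⁻¹ q.1 := lt_of_le_of_ne (not_lt.mp h) (Ne.symm hne)
        refine ⟨h', Or.inr ⟨?_, ?_⟩⟩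
        · simpa using h12
        · simpa [hvw] using hu
    · intro p hp
      simp only [mem_filter, mem_univ, true_and] at hp ⊢
      obtain ⟨h12, hor⟩ := hp
      rcases hor with ⟨hw, hvv⟩ | ⟨hw, hvv⟩
      · rw [if_pos hw]
        exact ⟨hw, by simpa [hvw] using hvv⟩
      · rw [if_neg (asymm hw)]
        exact ⟨hw, by simpa [hvw] using hvv⟩
    · intro q hq
      simp only [mem_filter, mem_univ, true_and] at hq
      obtain ⟨h12, _⟩ := hq
      by_cases h : w⁻¹ q.1 < w⁻¹ q.2
      · rw [if_pos h]
        have : w (w⁻¹ q.1) < w (w⁻¹ q.2) := by simpa using h12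
        rw [if_pos this]
        simp
      · rw [if_neg h]
        have : ¬ (w (w⁻¹ q.2) < w (w⁻¹ q.1)) := by simpa using asymm h12
        rw [if_neg this]
        simp
    · intro p hp
      simp only [mem_filter, mem_univ, true_and] at hp
      obtain ⟨h12, hor⟩ := hp
      rcases hor with ⟨hw, _⟩ | ⟨hw, _⟩
      · rw [if_pos hw]
        have : w⁻¹ (w p.1) < w⁻¹ (w p.2) := by simpa using h12
        rw [if_pos this]
        simp
      · rw [if_neg (asymm hw)]
        have : ¬ (w⁻¹ (w p.2) < w⁻¹ (w p.1)) := by simpa using asymm h12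
        rw [if_neg this]
        simp
  -- canonical pieces  -- canonical pieces
  have e2 : invCount u =
      (univ.filter fun p : Fin n × Fin n =>
        p.1 < p.2 ∧ w p.1 < w p.2 ∧ v p.2 < v p.1).card +
      (univ.filter fun p : Fin n × Fin n =>
        p.1 < p.2 ∧ w p.2 < w p.1 ∧ v p.1 < v p.2).card := by
    rw [step1, split_count _ (fun p => w p.1 < w p.2)]
    congr 1
    · apply congrArg
      apply filter_congr
      intro p _
      constructor
      · rintro ⟨⟨h12, hor⟩, hq⟩
        rcases hor with ⟨_, hvv⟩ | ⟨hw, _⟩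
        · exact ⟨h12, hq, hvv⟩
        · exact absurd hq (asymm hw)
      · rintro ⟨h12, hq, hvv⟩
        exact ⟨⟨h12, Or.inl ⟨hq, hvv⟩⟩, hq⟩
    · apply congrArg
      apply filter_congr
      intro p _
      constructor
      · rintro ⟨⟨h12, hor⟩, hq⟩
        rcases hor with ⟨hw, _⟩ | ⟨hw, hvv⟩
        · exact absurd hw hq
        · exact ⟨h12, hw, hvv⟩
      · rintro ⟨h12, hw, hvv⟩
        exact ⟨⟨h12, Or.inr ⟨hw, hvv⟩⟩, asymm hw⟩
  have e3 : invCount w =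
      (univ.filter fun p : Fin n × Fin n =>
        p.1 < p.2 ∧ w p.2 < w p.1 ∧ v p.2 < v p.1).card +
      (univ.filter fun p : Fin n × Fin n =>
        p.1 < p.2 ∧ w p.2 < w p.1 ∧ v p.1 < v p.2).card := by
    rw [invCount, split_count _ (fun p => v p.2 < v p.1)]
    congr 1
    · apply congrArg; apply filter_congr; intro p _
      constructor
      · rintro ⟨⟨h12, hw⟩, hq⟩; exact ⟨h12, hw, hq⟩
      · rintro ⟨h12, hw, hq⟩; exact ⟨⟨h12, hw⟩, hq⟩
    · apply congrArg; apply filter_congr; intro p _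
      constructor
      · rintro ⟨⟨h12, hw⟩, hq⟩
        have hne : v p.1 ≠ v p.2 := fun he => h12.ne (v.injective he)
        exact ⟨h12, hw, lt_of_le_of_ne (not_lt.mp hq) hne⟩
      · rintro ⟨h12, hw, hq⟩; exact ⟨⟨h12, hw⟩, asymm hq⟩
  have e4 : invCount v =
      (univ.filter fun p : Fin n × Fin n =>
        p.1 < p.2 ∧ w p.2 < w p.1 ∧ v p.2 < v p.1).card +
      (univ.filter fun p : Fin n × Fin n =>
        p.1 < p.2 ∧ w p.1 < w p.2 ∧ v p.2 < v p.1).card := by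
    rw [invCount, split_count _ (fun p => w p.2 < w p.1)]
    congr 1
    · apply congrArg; apply filter_congr; intro p _
      constructor
      · rintro ⟨⟨h12, hvv⟩, hq⟩; exact ⟨h12, hq, hvv⟩
      · rintro ⟨h12, hq, hvv⟩; exact ⟨⟨h12, hvv⟩, hq⟩
    · apply congrArg; apply filter_congr; intro p _
      constructor
      · rintro ⟨⟨h12, hvv⟩, hq⟩
        have hne : w p.1 ≠ w p.2 := fun he => h12.ne (w.injective he)
        exact ⟨h12, lt_of_le_of_ne (not_lt.mp hq) hne, hvv⟩
      · rintro ⟨h12, hw, hvv⟩; exact ⟨⟨h12, hvv⟩, asymm hw⟩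
  have e5 : (univ.filter fun p : Fin n × Fin n =>
        p.1 < p.2 ∧ w p.2 < w p.1 ∧ v p.1 < v p.2) =
      (univ.filter fun p : Fin n × Fin n =>
        p.1 < p.2 ∧ w p.2 < w p.1 ∧ (u * w) p.1 < (u * w) p.2) := rfl
  rw [e2, e3, e4, ← e5]
  omega

lemma wle_iff {n : ℕ} (u v : Equiv.Perm (Fin n)) :
    wle u v ↔ ∀ i j : Fin n, i < j → (u⁻¹ * v) j < (u⁻¹ * v) i → v j < v i := by
  have hk := key_count u (u⁻¹ * v)
  rw [show u * (u⁻¹ * v) = v by group] at hk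
  rw [wle]
  constructor
  · intro h i j hij hw
    have hc : (univ.filter fun p : Fin n × Fin n =>
        p.1 < p.2 ∧ (u⁻¹ * v) p.2 < (u⁻¹ * v) p.1 ∧ v p.1 < v p.2).card = 0 := by omega
    rw [Finset.card_eq_zero, Finset.filter_eq_empty_iff] at hc
    have := hc (Finset.mem_univ (i, j))
    push_neg at this
    have hne : v i ≠ v j := fun he => hij.ne (v.injective he)
    rcases lt_or_gt_of_ne hne with h' | h'
    · exact absurd (this hij hw) (not_le.mpr h')
    · exact h'
  · intro h
    have hc : (univ.filter fun p : Fin n × Fin n =>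
        p.1 < p.2 ∧ (u⁻¹ * v) p.2 < (u⁻¹ * v) p.1 ∧ v p.1 < v p.2).card = 0 := by
      rw [Finset.card_eq_zero, Finset.filter_eq_empty_iff]
      rintro p _ ⟨h12, hw, hvv⟩
      exact absurd hvv (asymm (h p.1 p.2 h12 hw))
    omega
lemma card_filter_lt_val {n : ℕ} (m : ℕ) (hm : m < n) :
    (univ.filter fun j : Fin n => (j : ℕ) < m).card = m := by
  have : (univ.filter fun j : Fin n => (j : ℕ) < m) = Finset.Iio (⟨m, hm⟩ : Fin n) := by
    ext j
    simp [Fin.lt_def]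
  rw [this, Fin.card_Iio]

lemma block_iff {n : ℕ} (f : Equiv.Perm (Fin n)) (m : ℕ) (hm : m < n)
    (h : ∀ i j : Fin n, (i : ℕ) < m → m ≤ (j : ℕ) → f i < f j) :
    ∀ i : Fin n, (i : ℕ) < m ↔ (f i : ℕ) < m := by
  have hcard : (univ.filter fun j : Fin n => ¬ ((j : ℕ) < m)).card = n - m := by
    have := card_filter_add_card_filter_not (s := (univ : Finset (Fin n)))
      (p := fun j : Fin n => (j : ℕ) < m)
    rw [card_filter_lt_val m hm] at this
    simp only [Finset.card_univ, Fintype.card_fin] at this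
    omega
  have C1 : ∀ i : Fin n, (i : ℕ) < m → (f i : ℕ) < m := by
    intro i hi
    have hmap : ∀ j ∈ (univ.filter fun j : Fin n => ¬ ((j : ℕ) < m)),
        f j ∈ Finset.Ioi (f i) := by
      intro j hj
      simp only [mem_filter, mem_univ, true_and, not_lt] at hj
      exact Finset.mem_Ioi.mpr (h i j hi hj)
    have hinj : Set.InjOn f (univ.filter fun j : Fin n => ¬ ((j : ℕ) < m)) :=
      fun a _ b _ hab => f.injective hab
    have hle := Finset.card_le_card_of_injOn f hmap hinj
    rw [hcard, Fin.card_Ioi] at hle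
    have := (f i).2
    omega
  have C2 : ∀ i : Fin n, m ≤ (i : ℕ) → m ≤ (f i : ℕ) := by
    intro i hi
    have hmap : ∀ j ∈ (univ.filter fun j : Fin n => (j : ℕ) < m),
        f j ∈ Finset.Iio (f i) := by
      intro j hj
      simp only [mem_filter, mem_univ, true_and] at hj
      exact Finset.mem_Iio.mpr (h j i hj hi)
    have hinj : Set.InjOn f (univ.filter fun j : Fin n => (j : ℕ) < m) :=
      fun a _ b _ hab => f.injective hab
    have hle := Finset.card_le_card_of_injOn f hmap hinj
    rw [card_filter_lt_val m hm, Fin.card_Iio] at hle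
    exact hle
  intro i
  constructor
  · exact C1 i
  · intro hfi
    by_contra hi
    exact absurd hfi (not_lt.mpr (C2 i (not_lt.mp hi)))

def joinFun {n : ℕ} (m : ℕ) (hm : m ≤ n) (a : Equiv.Perm (Fin m))
    (b : Equiv.Perm (Fin (n - m))) : Fin n → Fin n := fun i =>
  if h : (i : ℕ) < m then ⟨(a ⟨i, h⟩ : ℕ), lt_of_lt_of_le (a ⟨i, h⟩).2 hm⟩
  else ⟨m + (b ⟨(i : ℕ) - m, by have := i.2; omega⟩ : ℕ),
    by have := (b ⟨(i : ℕ) - m, by have := i.2; omega⟩).2; omega⟩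

lemma joinFun_injective {n : ℕ} (m : ℕ) (hm : m ≤ n) (a : Equiv.Perm (Fin m))
    (b : Equiv.Perm (Fin (n - m))) : Function.Injective (joinFun m hm a b) := by
  intro x y hxy
  unfold joinFun at hxy
  split_ifs at hxy with h1 h2 h2 <;>
    rw [Fin.mk.injEq] at hxy
  · have : (⟨(x : ℕ), h1⟩ : Fin m) = ⟨(y : ℕ), h2⟩ := a.injective (Fin.ext hxy)
    exact Fin.ext (by simpa [Fin.ext_iff] using this)
  · exact absurd hxy (by have := (a ⟨(x : ℕ), h1⟩).2; omega)
  · exact absurd hxy (by have := (a ⟨(y : ℕ), h2⟩).2; omega)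
  · have : (⟨(x : ℕ) - m, _⟩ : Fin (n - m)) = ⟨(y : ℕ) - m, _⟩ :=
      b.injective (Fin.ext (by omega))
    have := (Fin.ext_iff.mp this)
    simp only at this
    exact Fin.ext (by omega)

noncomputable def joinPerm {n : ℕ} (m : ℕ) (hm : m ≤ n) (a : Equiv.Perm (Fin m))
    (b : Equiv.Perm (Fin (n - m))) : Equiv.Perm (Fin n) :=
  Equiv.ofBijective _ (Finite.injective_iff_bijective.mp (joinFun_injective m hm a b))

lemma joinPerm_apply_lt {n : ℕ} {m : ℕ} (hm : m ≤ n) (a : Equiv.Perm (Fin m))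
    (b : Equiv.Perm (Fin (n - m))) (i : Fin n) (h : (i : ℕ) < m) :
    (joinPerm m hm a b i : ℕ) = (a ⟨i, h⟩ : ℕ) := by
  simp only [joinPerm, Equiv.ofBijective_apply, joinFun, dif_pos h]

lemma joinPerm_apply_ge {n : ℕ} {m : ℕ} (hm : m ≤ n) (a : Equiv.Perm (Fin m))
    (b : Equiv.Perm (Fin (n - m))) (i : Fin n) (h : ¬ ((i : ℕ) < m)) :
    (joinPerm m hm a b i : ℕ) =
      m + (b ⟨(i : ℕ) - m, by have := i.2; omega⟩ : ℕ) := by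
  simp only [joinPerm, Equiv.ofBijective_apply, joinFun, dif_neg h]
lemma joinPerm_apply_castLT {n : ℕ} {m : ℕ} (hm : m ≤ n) (a : Equiv.Perm (Fin m))
    (b : Equiv.Perm (Fin (n - m))) (x : Fin m) (i : Fin n) (hi : (i : ℕ) = (x : ℕ)) :
    (joinPerm m hm a b i : ℕ) = (a x : ℕ) := by
  rw [joinPerm_apply_lt hm a b i (by rw [hi]; exact x.2)]
  refine congrArg (fun z : Fin m => ((a z : Fin m) : ℕ)) (Fin.ext ?_)
  exact hi

lemma joinPerm_apply_natAdd {n : ℕ} {m : ℕ} (hm : m ≤ n) (a : Equiv.Perm (Fin m))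
    (b : Equiv.Perm (Fin (n - m))) (x : Fin (n - m)) (i : Fin n)
    (hi : (i : ℕ) = m + (x : ℕ)) :
    (joinPerm m hm a b i : ℕ) = m + (b x : ℕ) := by
  rw [joinPerm_apply_ge hm a b i (by omega)]
  refine congrArg (fun z : Fin (n - m) => m + ((b z : Fin (n - m)) : ℕ)) (Fin.ext ?_)
  show (i : ℕ) - m = (x : ℕ)
  omega

lemma joinPerm_lt_iff {n : ℕ} {m : ℕ} (hm : m ≤ n) (a : Equiv.Perm (Fin m))
    (b : Equiv.Perm (Fin (n - m))) (i : Fin n) :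
    (joinPerm m hm a b i : ℕ) < m ↔ (i : ℕ) < m := by
  by_cases h : (i : ℕ) < m
  · rw [joinPerm_apply_lt hm a b i h]
    exact ⟨fun _ => h, fun _ => (a ⟨i, h⟩).2⟩
  · rw [joinPerm_apply_ge hm a b i h]
    constructor
    · intro hc; omega
    · intro hc; exact absurd hc h

set_option maxHeartbeats 1000000 in
lemma joinPerm_mul {n : ℕ} {m : ℕ} (hm : m ≤ n) (a a' : Equiv.Perm (Fin m))
    (b b' : Equiv.Perm (Fin (n - m))) :
    joinPerm m hm a b * joinPerm m hm a' b' = joinPerm m hm (a * a') (b * b') := by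
  apply Equiv.ext
  intro i
  apply Fin.ext
  rw [Equiv.Perm.mul_apply]
  by_cases h : (i : ℕ) < m
  · have h1 := joinPerm_apply_lt hm a' b' i h
    rw [joinPerm_apply_castLT hm a b (a' ⟨i, h⟩) _ h1,
      joinPerm_apply_lt hm (a * a') (b * b') i h]
    rfl
  · have h1 := joinPerm_apply_ge hm a' b' i h
    rw [joinPerm_apply_natAdd hm a b (b' ⟨(i : ℕ) - m, by have := i.2; omega⟩) _ h1,
      joinPerm_apply_ge hm (a * a') (b * b') i h]
    rfl

lemma joinPerm_one {n : ℕ} {m : ℕ} (hm : m ≤ n) :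
    joinPerm m hm (1 : Equiv.Perm (Fin m)) (1 : Equiv.Perm (Fin (n - m))) = 1 := by
  apply Equiv.ext
  intro i
  apply Fin.ext
  by_cases h : (i : ℕ) < m
  · rw [joinPerm_apply_lt hm _ _ i h]
    rfl
  · rw [joinPerm_apply_ge hm _ _ i h]
    show m + ((i : ℕ) - m) = (i : ℕ)
    omega

lemma joinPerm_inv {n : ℕ} {m : ℕ} (hm : m ≤ n) (a : Equiv.Perm (Fin m))
    (b : Equiv.Perm (Fin (n - m))) :
    (joinPerm m hm a b)⁻¹ = joinPerm m hm a⁻¹ b⁻¹ := by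
  apply inv_eq_of_mul_eq_one_right
  rw [joinPerm_mul, mul_inv_cancel, mul_inv_cancel, joinPerm_one]
lemma invCount_joinPerm {n : ℕ} {m : ℕ} (hm : m ≤ n) (a : Equiv.Perm (Fin m))
    (b : Equiv.Perm (Fin (n - m))) :
    invCount (joinPerm m hm a b) = invCount a + invCount b := by
  classical
  have hsplit := split_count (n := n)
    (fun p => p.1 < p.2 ∧ joinPerm m hm a b p.2 < joinPerm m hm a b p.1)
    (fun p => (p.2 : ℕ) < m)
  have hlow : (univ.filter fun p : Fin n × Fin n =>
        (p.1 < p.2 ∧ joinPerm m hm a b p.2 < joinPerm m hm a b p.1) ∧ (p.2 : ℕ) < m)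
      = (univ.filter fun q : Fin m × Fin m => q.1 < q.2 ∧ a q.2 < a q.1).image
          (fun q => (Fin.castLE hm q.1, Fin.castLE hm q.2)) := by
    ext p
    simp only [Finset.mem_image, mem_filter, mem_univ, true_and]
    constructor
    · rintro ⟨⟨h12, hJi⟩, h2m⟩
      have h1m : (p.1 : ℕ) < m :=
        lt_trans (show (p.1 : ℕ) < (p.2 : ℕ) from h12) h2m
      have e1 := joinPerm_apply_lt hm a b p.1 h1m
      have e2 := joinPerm_apply_lt hm a b p.2 h2m
      have hv : (joinPerm m hm a b p.2 : ℕ) < (joinPerm m hm a b p.1 : ℕ) := hJi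
      refine ⟨(⟨(p.1 : ℕ), h1m⟩, ⟨(p.2 : ℕ), h2m⟩), ⟨?_, ?_⟩, ?_⟩
      · exact h12
      · dsimp only
        exact Fin.lt_def.mpr (by omega)
      · dsimp only
        refine Prod.ext ?_ ?_ <;> exact Fin.ext rfl
    · rintro ⟨q, ⟨h12, hab⟩, rfl⟩
      dsimp only
      have e1 : (joinPerm m hm a b (Fin.castLE hm q.1) : ℕ) = ((a q.1 : Fin m) : ℕ) :=
        joinPerm_apply_lt hm a b _ (by simpa using q.1.2)
      have e2 : (joinPerm m hm a b (Fin.castLE hm q.2) : ℕ) = ((a q.2 : Fin m) : ℕ) :=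
        joinPerm_apply_lt hm a b _ (by simpa using q.2.2)
      have hv : ((a q.2 : Fin m) : ℕ) < ((a q.1 : Fin m) : ℕ) := hab
      refine ⟨⟨Fin.lt_def.mpr (by simpa using (Fin.lt_def.mp h12)), ?_⟩, by simpa using q.2.2⟩
      exact Fin.lt_def.mpr (by omega)
  have hhigh : (univ.filter fun p : Fin n × Fin n =>
        (p.1 < p.2 ∧ joinPerm m hm a b p.2 < joinPerm m hm a b p.1) ∧ ¬ ((p.2 : ℕ) < m))
      = (univ.filter fun q : Fin (n - m) × Fin (n - m) =>
          q.1 < q.2 ∧ b q.2 < b q.1).image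
          (fun q => ((⟨m + (q.1 : ℕ), by have := q.1.2; omega⟩ : Fin n),
                     (⟨m + (q.2 : ℕ), by have := q.2.2; omega⟩ : Fin n))) := by
    ext p
    simp only [Finset.mem_image, mem_filter, mem_univ, true_and]
    constructor
    · rintro ⟨⟨h12, hJi⟩, h2m⟩
      have hv : (joinPerm m hm a b p.2 : ℕ) < (joinPerm m hm a b p.1 : ℕ) := hJi
      have h1m : ¬ ((p.1 : ℕ) < m) := by
        intro h1
        have e1 := joinPerm_apply_lt hm a b p.1 h1
        have e2 := joinPerm_apply_ge hm a b p.2 h2m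
        have := (a ⟨(p.1 : ℕ), h1⟩).2
        omega
      have hp1 : (p.1 : ℕ) - m < n - m := by have := p.1.2; omega
      have hp2 : (p.2 : ℕ) - m < n - m := by have := p.2.2; omega
      have e1 := joinPerm_apply_natAdd hm a b ⟨(p.1 : ℕ) - m, hp1⟩ p.1
        (by show (p.1 : ℕ) = m + ((p.1 : ℕ) - m); omega)
      have e2 := joinPerm_apply_natAdd hm a b ⟨(p.2 : ℕ) - m, hp2⟩ p.2
        (by show (p.2 : ℕ) = m + ((p.2 : ℕ) - m); omega)
      have h12' : (p.1 : ℕ) < (p.2 : ℕ) := h12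
      refine ⟨(⟨(p.1 : ℕ) - m, hp1⟩, ⟨(p.2 : ℕ) - m, hp2⟩), ⟨?_, ?_⟩, ?_⟩
      · exact Fin.lt_def.mpr (by show (p.1 : ℕ) - m < (p.2 : ℕ) - m; omega)
      · dsimp only
        exact Fin.lt_def.mpr (by omega)
      · refine Prod.ext (Fin.ext ?_) (Fin.ext ?_)
        · show m + ((p.1 : ℕ) - m) = (p.1 : ℕ); omega
        · show m + ((p.2 : ℕ) - m) = (p.2 : ℕ); omega
    · rintro ⟨q, ⟨h12, hab⟩, rfl⟩
      dsimp only
      have h12' : (q.1 : ℕ) < (q.2 : ℕ) := h12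
      refine ⟨⟨?_, ?_⟩, ?_⟩
      · exact Fin.lt_def.mpr (by show m + (q.1 : ℕ) < m + (q.2 : ℕ); omega)
      · apply Fin.lt_def.mpr
        rw [joinPerm_apply_natAdd hm a b q.2 _ rfl, joinPerm_apply_natAdd hm a b q.1 _ rfl]
        have hv : ((b q.2 : Fin (n - m)) : ℕ) < ((b q.1 : Fin (n - m)) : ℕ) := hab
        omega
      · show ¬ (m + (q.2 : ℕ) < m); omega
  have hinj1 : Function.Injective
      (fun q : Fin m × Fin m => (Fin.castLE hm q.1, Fin.castLE hm q.2)) := by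
    intro q q' h
    rw [Prod.mk.injEq] at h
    exact Prod.ext (Fin.castLE_injective hm h.1) (Fin.castLE_injective hm h.2)
  have hinj2 : Function.Injective
      (fun q : Fin (n - m) × Fin (n - m) =>
        ((⟨m + (q.1 : ℕ), by have := q.1.2; omega⟩ : Fin n),
         (⟨m + (q.2 : ℕ), by have := q.2.2; omega⟩ : Fin n))) := by
    intro q q' h
    rw [Prod.mk.injEq, Fin.mk.injEq, Fin.mk.injEq] at h
    exact Prod.ext (Fin.ext (by omega)) (Fin.ext (by omega))
  have hstart : invCount (joinPerm m hm a b) = (univ.filter fun p : Fin n × Fin n =>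
      p.1 < p.2 ∧ joinPerm m hm a b p.2 < joinPerm m hm a b p.1).card := rfl
  rw [hstart, hsplit, hlow, hhigh, Finset.card_image_of_injective _ hinj1,
    Finset.card_image_of_injective _ hinj2]
  rfl
lemma wle_joinPerm {n m : ℕ} (hm : m ≤ n) (a a' : Equiv.Perm (Fin m))
    (b b' : Equiv.Perm (Fin (n - m))) :
    wle (joinPerm m hm a b) (joinPerm m hm a' b') ↔ wle a a' ∧ wle b b' := by
  rw [wle_iff, wle_iff, wle_iff]
  have hww : (joinPerm m hm a b)⁻¹ * joinPerm m hm a' b'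
      = joinPerm m hm (a⁻¹ * a') (b⁻¹ * b') := by
    rw [joinPerm_inv, joinPerm_mul]
  rw [hww]
  constructor
  · intro H
    constructor
    · intro x y hxy hw
      have e1 : (joinPerm m hm (a⁻¹ * a') (b⁻¹ * b') (Fin.castLE hm x) : ℕ)
          = ((a⁻¹ * a') x : ℕ) := joinPerm_apply_castLT hm _ _ x _ rfl
      have e2 : (joinPerm m hm (a⁻¹ * a') (b⁻¹ * b') (Fin.castLE hm y) : ℕ)
          = ((a⁻¹ * a') y : ℕ) := joinPerm_apply_castLT hm _ _ y _ rfl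
      have e3 : (joinPerm m hm a' b' (Fin.castLE hm x) : ℕ)
          = (a' x : ℕ) := joinPerm_apply_castLT hm _ _ x _ rfl
      have e4 : (joinPerm m hm a' b' (Fin.castLE hm y) : ℕ)
          = (a' y : ℕ) := joinPerm_apply_castLT hm _ _ y _ rfl
      have key := H (Fin.castLE hm x) (Fin.castLE hm y)
        (Fin.lt_def.mpr (by simpa using Fin.lt_def.mp hxy))
        (Fin.lt_def.mpr (by rw [e1, e2]; exact Fin.lt_def.mp hw))
      have kv := Fin.lt_def.mp key
      rw [e3, e4] at kv
      exact Fin.lt_def.mpr kv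
    · intro x y hxy hw
      have px : m + (x : ℕ) < n := by have := x.2; omega
      have py : m + (y : ℕ) < n := by have := y.2; omega
      have e1 : (joinPerm m hm (a⁻¹ * a') (b⁻¹ * b') ⟨m + (x : ℕ), px⟩ : ℕ)
          = m + ((b⁻¹ * b') x : ℕ) := joinPerm_apply_natAdd hm _ _ x _ rfl
      have e2 : (joinPerm m hm (a⁻¹ * a') (b⁻¹ * b') ⟨m + (y : ℕ), py⟩ : ℕ)
          = m + ((b⁻¹ * b') y : ℕ) := joinPerm_apply_natAdd hm _ _ y _ rfl
      have e3 : (joinPerm m hm a' b' ⟨m + (x : ℕ), px⟩ : ℕ)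
          = m + (b' x : ℕ) := joinPerm_apply_natAdd hm _ _ x _ rfl
      have e4 : (joinPerm m hm a' b' ⟨m + (y : ℕ), py⟩ : ℕ)
          = m + (b' y : ℕ) := joinPerm_apply_natAdd hm _ _ y _ rfl
      have hxy' : (x : ℕ) < (y : ℕ) := Fin.lt_def.mp hxy
      have hw' : ((b⁻¹ * b') y : ℕ) < ((b⁻¹ * b') x : ℕ) := Fin.lt_def.mp hw
      have key := H ⟨m + (x : ℕ), px⟩ ⟨m + (y : ℕ), py⟩
        (Fin.lt_def.mpr (by show m + (x : ℕ) < m + (y : ℕ); omega))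
        (Fin.lt_def.mpr (by rw [e1, e2]; omega))
      have kv := Fin.lt_def.mp key
      rw [e3, e4] at kv
      exact Fin.lt_def.mpr (by omega)
  · rintro ⟨HA, HB⟩ i j hij hw
    have hij' : (i : ℕ) < (j : ℕ) := Fin.lt_def.mp hij
    by_cases hi : (i : ℕ) < m <;> by_cases hj : (j : ℕ) < m
    · have e1 := joinPerm_apply_lt hm (a⁻¹ * a') (b⁻¹ * b') i hi
      have e2 := joinPerm_apply_lt hm (a⁻¹ * a') (b⁻¹ * b') j hj
      have e3 := joinPerm_apply_lt hm a' b' i hi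
      have e4 := joinPerm_apply_lt hm a' b' j hj
      have hw' := Fin.lt_def.mp hw
      rw [e1, e2] at hw'
      have key := HA ⟨(i : ℕ), hi⟩ ⟨(j : ℕ), hj⟩ (Fin.lt_def.mpr hij')
        (Fin.lt_def.mpr hw')
      have kv := Fin.lt_def.mp key
      apply Fin.lt_def.mpr
      rw [e3, e4]
      exact kv
    · exfalso
      have e1 := joinPerm_apply_lt hm (a⁻¹ * a') (b⁻¹ * b') i hi
      have e2 := joinPerm_apply_ge hm (a⁻¹ * a') (b⁻¹ * b') j hj
      have hb := ((a⁻¹ * a') ⟨(i : ℕ), hi⟩).2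
      have hw' := Fin.lt_def.mp hw
      omega
    · omega
    · have pi' : (i : ℕ) - m < n - m := by have := i.2; omega
      have pj' : (j : ℕ) - m < n - m := by have := j.2; omega
      have e1 := joinPerm_apply_natAdd hm (a⁻¹ * a') (b⁻¹ * b') ⟨(i : ℕ) - m, pi'⟩ i
        (by show (i : ℕ) = m + ((i : ℕ) - m); omega)
      have e2 := joinPerm_apply_natAdd hm (a⁻¹ * a') (b⁻¹ * b') ⟨(j : ℕ) - m, pj'⟩ j
        (by show (j : ℕ) = m + ((j : ℕ) - m); omega)
      have e3 := joinPerm_apply_natAdd hm a' b' ⟨(i : ℕ) - m, pi'⟩ i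
        (by show (i : ℕ) = m + ((i : ℕ) - m); omega)
      have e4 := joinPerm_apply_natAdd hm a' b' ⟨(j : ℕ) - m, pj'⟩ j
        (by show (j : ℕ) = m + ((j : ℕ) - m); omega)
      have hw' := Fin.lt_def.mp hw
      have key := HB ⟨(i : ℕ) - m, pi'⟩ ⟨(j : ℕ) - m, pj'⟩
        (Fin.lt_def.mpr (by show (i : ℕ) - m < (j : ℕ) - m; omega))
        (Fin.lt_def.mpr (by omega))
      have kv := Fin.lt_def.mp key
      apply Fin.lt_def.mpr
      omega
def natFun {n : ℕ} (π : Equiv.Perm (Fin n)) : ℕ → ℕ := fun i =>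
  if h : i < n then (π ⟨i, h⟩ : ℕ) else 0

lemma natFun_lt {n : ℕ} (π : Equiv.Perm (Fin n)) (i : ℕ) (h : i < n) :
    natFun π i = (π ⟨i, h⟩ : ℕ) := dif_pos h

lemma natFun_inj {n : ℕ} (π : Equiv.Perm (Fin n)) {x y : ℕ} (hx : x < n) (hy : y < n)
    (he : natFun π x = natFun π y) : x = y := by
  rw [natFun_lt π x hx, natFun_lt π y hy] at he
  have := π.injective (Fin.ext he)
  rw [Fin.mk.injEq] at this
  exact this

open scoped Classical in
noncomputable def chainG {n : ℕ} (π : Equiv.Perm (Fin n)) : ℕ → ℕ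
  | 0 => 0
  | t + 1 => Nat.findGreatest
      (fun jj => ∃ x, x ≤ chainG π t ∧ x < jj ∧ jj < n ∧ natFun π jj < natFun π x) (n - 1)

open scoped Classical in
lemma chainG_succ {n : ℕ} (π : Equiv.Perm (Fin n)) (t : ℕ) :
    chainG π (t + 1) = Nat.findGreatest
      (fun jj => ∃ x, x ≤ chainG π t ∧ x < jj ∧ jj < n ∧ natFun π jj < natFun π x)
      (n - 1) := by
  rw [chainG]

lemma chainG_le {n : ℕ} (π : Equiv.Perm (Fin n)) (t : ℕ) (hn : 1 ≤ n) :
    chainG π t ≤ n - 1 := by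
  cases t with
  | zero => rw [chainG]; omega
  | succ t => rw [chainG_succ]; exact Nat.findGreatest_le _

open scoped Classical in
lemma chainG_step {n : ℕ} (π : Equiv.Perm (Fin n))
    (Hc : ∀ k, 1 ≤ k → k < n →
      ∃ x y, x < k ∧ k ≤ y ∧ y < n ∧ natFun π y < natFun π x)
    (t : ℕ) (ht : chainG π t < n - 1) :
    chainG π t < chainG π (t + 1) ∧
      ∃ x, x ≤ chainG π t ∧ x < chainG π (t + 1) ∧ chainG π (t + 1) < n ∧
        natFun π (chainG π (t + 1)) < natFun π x := by
  obtain ⟨x, y, hx, hky, hyn, hinv⟩ := Hc (chainG π t + 1) (by omega) (by omega)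
  have hP : ∃ x', x' ≤ chainG π t ∧ x' < y ∧ y < n ∧ natFun π y < natFun π x' :=
    ⟨x, by omega, by omega, hyn, hinv⟩
  have hle : y ≤ chainG π (t + 1) := by
    rw [chainG_succ]
    exact Nat.le_findGreatest (by omega) hP
  have hspec : ∃ x', x' ≤ chainG π t ∧ x' < chainG π (t + 1) ∧ chainG π (t + 1) < n ∧
      natFun π (chainG π (t + 1)) < natFun π x' := by
    have hspec0 := Nat.findGreatest_spec
      (P := fun jj => ∃ x', x' ≤ chainG π t ∧ x' < jj ∧ jj < n ∧ natFun π jj < natFun π x')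
      (n := n - 1) (m := y) (by omega) hP
    rw [← chainG_succ] at hspec0
    exact hspec0
  exact ⟨by omega, hspec⟩

lemma exists_cut (n : ℕ) (hn : 0 < n) (π : Equiv.Perm (Fin n))
    (hsep : IsSeparable π) (hfl : π ⟨0, hn⟩ < π ⟨n - 1, Nat.sub_lt hn Nat.one_pos⟩) :
    ∃ m : ℕ, 1 ≤ m ∧ m < n ∧
      ∀ i j : Fin n, (i : ℕ) < m → m ≤ (j : ℕ) → π i < π j := by
  classical
  have hn2 : 2 ≤ n := by
    by_contra hcon
    have h1 : (⟨0, hn⟩ : Fin n) = ⟨n - 1, by omega⟩ := Fin.ext (by simp; omega)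
    rw [h1] at hfl
    exact lt_irrefl _ hfl
  by_contra hcon
  push_neg at hcon
  -- translate to ℕ level crossing inversions
  have Hc : ∀ k, 1 ≤ k → k < n →
      ∃ x y, x < k ∧ k ≤ y ∧ y < n ∧ natFun π y < natFun π x := by
    intro k hk1 hkn
    obtain ⟨i, j, hi, hj, hnlt⟩ := hcon k hk1 hkn
    have hne : π i ≠ π j := fun he => by
      have := π.injective he
      rw [this] at hi
      omega
    have hlt : (π j : ℕ) < (π i : ℕ) := by
      have := Fin.lt_def.mp (lt_of_le_of_ne hnlt (Ne.symm hne))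
      exact this
    refine ⟨(i : ℕ), (j : ℕ), hi, hj, j.2, ?_⟩
    rw [natFun_lt π i i.2, natFun_lt π j j.2]
    simpa using hlt
  -- basic facts
  have hfl' : natFun π 0 < natFun π (n - 1) := by
    rw [natFun_lt π 0 (by omega), natFun_lt π (n - 1) (by omega)]
    exact hfl
  have hGle : ∀ t, chainG π t ≤ n - 1 := fun t => chainG_le π t (by omega)
  -- the chain reaches n - 1
  have hreach : ∃ t, chainG π t = n - 1 := by
    have H : ∀ t, (∃ s, s ≤ t ∧ chainG π s = n - 1) ∨ t ≤ chainG π t := by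
      intro t
      induction t with
      | zero => right; exact Nat.zero_le _
      | succ t ih =>
        rcases ih with ⟨s, hs, he⟩ | hle
        · left; exact ⟨s, by omega, he⟩
        · by_cases he : chainG π t = n - 1
          · left; exact ⟨t, by omega, he⟩
          · have h1 : chainG π t < n - 1 := lt_of_le_of_ne (hGle t) he
            have := (chainG_step π Hc t h1).1
            right; omega
    rcases H n with ⟨s, _, he⟩ | h
    · exact ⟨s, he⟩
    · have := hGle n; omega
  set r := Nat.find hreach with hrdef
  have hr : chainG π r = n - 1 := Nat.find_spec hreach
  have hprev : ∀ s, s < r → chainG π s < n - 1 := fun s hs =>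
    lt_of_le_of_ne (hGle s) (Nat.find_min hreach hs)
  have hr0 : 1 ≤ r := by
    rcases Nat.eq_zero_or_pos r with h0 | h
    · exfalso
      have : chainG π 0 = n - 1 := by rw [← h0]; exact hr
      rw [chainG] at this
      omega
    · exact h
  -- the witness a_r for the last step
  have hstep := chainG_step π Hc (r - 1) (hprev (r - 1) (by omega))
  rw [show r - 1 + 1 = r from by omega] at hstep
  obtain ⟨-, ar, har_le, har_lt, -, har_inv⟩ := hstep
  rw [hr] at har_lt har_inv
  have har0 : 1 ≤ ar := by
    rcases Nat.eq_zero_or_pos ar with h0 | h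
    · rw [h0] at har_inv; omega
    · exact h
  -- minimal t with a_r ≤ chainG π t
  have ht_ex : ∃ t, ar ≤ chainG π t := ⟨r - 1, har_le⟩
  set t := Nat.find ht_ex with htdef
  have htt : ar ≤ chainG π t := Nat.find_spec ht_ex
  have ht_min : ∀ s, s < t → ¬ ar ≤ chainG π s := fun s hs => Nat.find_min ht_ex hs
  have ht1 : 1 ≤ t := by
    rcases Nat.eq_zero_or_pos t with h0 | h
    · exfalso
      have := htt
      rw [h0, chainG] at this
      omega
    · exact h
  have htr : t ≤ r - 1 := Nat.find_min' ht_ex har_le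
  have hgt_lt : chainG π t < n - 1 := hprev t (by omega)
  have hgprev : chainG π (t - 1) < ar := not_le.mp (ht_min (t - 1) (by omega))
  -- the witness a_t for step t
  have hstep2 := chainG_step π Hc (t - 1) (hprev (t - 1) (by omega))
  rw [show t - 1 + 1 = t from by omega] at hstep2
  obtain ⟨-, at', hat_le, hat_lt, hgtn, hat_inv⟩ := hstep2
  -- maximality of chainG π t : no inversion from prefix to n - 1
  have hng : ¬ (∃ x, x ≤ chainG π (t - 1) ∧ x < n - 1 ∧ n - 1 < n ∧
      natFun π (n - 1) < natFun π x) := by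
    have h2 : chainG π (t - 1 + 1) < n - 1 := by
      rw [show t - 1 + 1 = t from by omega]; exact hgt_lt
    rw [chainG_succ] at h2
    exact Nat.findGreatest_is_greatest h2 (le_refl _)
  push_neg at hng
  have hxt_le : natFun π at' ≤ natFun π (n - 1) :=
    not_lt.mp (fun hc => (by
      have := hng at' hat_le (by omega) (by omega)
      omega))
  have hxt_ne : at' ≠ n - 1 := by omega
  have hxt_lt : natFun π at' < natFun π (n - 1) :=
    lt_of_le_of_ne hxt_le (fun he => hxt_ne (natFun_inj π (by omega) (by omega) he))
  -- a_r < chainG π t strictly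
  have har_lt_g : ar < chainG π t := by
    rcases lt_or_eq_of_le htt with h | h
    · exact h
    · exfalso
      rw [← h] at hat_inv
      omega
  -- four positions: at' < ar < chainG π t < n - 1, pattern 2413-type
  have hbig : natFun π (chainG π t) < natFun π at' := hat_inv
  refine hsep.2 ⟨⟨at', by omega⟩, ⟨ar, by omega⟩, ⟨chainG π t, by omega⟩,
    ⟨n - 1, by omega⟩, ?_, ?_, ?_, ?_, ?_, ?_⟩
  · exact Fin.lt_def.mpr (by simp; omega)
  · exact Fin.lt_def.mpr (by simp; omega)
  · exact Fin.lt_def.mpr (by simp; omega)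
  · apply Fin.lt_def.mpr
    rw [show (π ⟨chainG π t, by omega⟩ : ℕ) = natFun π (chainG π t) from
        (natFun_lt π _ (by omega)).symm,
      show (π ⟨at', by omega⟩ : ℕ) = natFun π at' from (natFun_lt π _ (by omega)).symm]
    omega
  · apply Fin.lt_def.mpr
    rw [show (π ⟨at', by omega⟩ : ℕ) = natFun π at' from (natFun_lt π _ (by omega)).symm,
      show (π ⟨n - 1, by omega⟩ : ℕ) = natFun π (n - 1) from
        (natFun_lt π _ (by omega)).symm]
    omega
  · apply Fin.lt_def.mpr
    rw [show (π ⟨n - 1, by omega⟩ : ℕ) = natFun π (n - 1) from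
        (natFun_lt π _ (by omega)).symm,
      show (π ⟨ar, by omega⟩ : ℕ) = natFun π ar from (natFun_lt π _ (by omega)).symm]
    omega
lemma block_ge {n : ℕ} (π : Equiv.Perm (Fin n)) (m : ℕ)
    (hblock : ∀ i : Fin n, (i : ℕ) < m ↔ (π i : ℕ) < m) (i : Fin n)
    (hi : ¬ ((i : ℕ) < m)) : m ≤ (π i : ℕ) :=
  not_lt.mp (fun hc => hi ((hblock i).mpr hc))

noncomputable def restrictLow {n : ℕ} (π : Equiv.Perm (Fin n)) (m : ℕ) (hm : m ≤ n)
    (hblock : ∀ i : Fin n, (i : ℕ) < m ↔ (π i : ℕ) < m) : Equiv.Perm (Fin m) :=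
  Equiv.ofBijective (fun x => ⟨(π ⟨(x : ℕ), lt_of_lt_of_le x.2 hm⟩ : ℕ),
      (hblock ⟨(x : ℕ), lt_of_lt_of_le x.2 hm⟩).mp x.2⟩)
    (Finite.injective_iff_bijective.mp (by
      intro x y hxy
      rw [Fin.mk.injEq] at hxy
      have h2 := π.injective (Fin.ext hxy)
      rw [Fin.mk.injEq] at h2
      exact Fin.ext h2))

noncomputable def restrictHigh {n : ℕ} (π : Equiv.Perm (Fin n)) (m : ℕ) (hm : m ≤ n)
    (hblock : ∀ i : Fin n, (i : ℕ) < m ↔ (π i : ℕ) < m) : Equiv.Perm (Fin (n - m)) :=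
  Equiv.ofBijective (fun x => ⟨(π ⟨m + (x : ℕ), by have := x.2; omega⟩ : ℕ) - m, by
      have h1 := (π ⟨m + (x : ℕ), by have := x.2; omega⟩).2
      have h2 : m ≤ (π ⟨m + (x : ℕ), by have := x.2; omega⟩ : ℕ) := by
        refine block_ge π m hblock _ ?_
        show ¬ (m + (x : ℕ) < m)
        omega
      omega⟩)
    (Finite.injective_iff_bijective.mp (by
      intro x y hxy
      rw [Fin.mk.injEq] at hxy
      have hgx : m ≤ (π ⟨m + (x : ℕ), by have := x.2; omega⟩ : ℕ) := by
        refine block_ge π m hblock _ ?_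
        show ¬ (m + (x : ℕ) < m)
        omega
      have hgy : m ≤ (π ⟨m + (y : ℕ), by have := y.2; omega⟩ : ℕ) := by
        refine block_ge π m hblock _ ?_
        show ¬ (m + (y : ℕ) < m)
        omega
      have hv : (π ⟨m + (x : ℕ), by have := x.2; omega⟩ : ℕ)
          = (π ⟨m + (y : ℕ), by have := y.2; omega⟩ : ℕ) := by omega
      have h2 := π.injective (Fin.ext hv)
      rw [Fin.mk.injEq] at h2
      exact Fin.ext (by omega)))

lemma joinPerm_restrict {n : ℕ} (f : Equiv.Perm (Fin n)) (m : ℕ) (hm : m ≤ n)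
    (hblock : ∀ i : Fin n, (i : ℕ) < m ↔ (f i : ℕ) < m) :
    joinPerm m hm (restrictLow f m hm hblock) (restrictHigh f m hm hblock) = f := by
  apply Equiv.ext
  intro i
  apply Fin.ext
  by_cases h : (i : ℕ) < m
  · rw [joinPerm_apply_lt hm _ _ i h]
    rfl
  · rw [joinPerm_apply_ge hm _ _ i h]
    have hidx : m + ((i : ℕ) - m) < n := by have := i.2; omega
    show m + ((f ⟨m + ((i : ℕ) - m), hidx⟩ : ℕ) - m) = (f i : ℕ)
    have hieq : (⟨m + ((i : ℕ) - m), hidx⟩ : Fin n) = i :=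
      Fin.ext (by show m + ((i : ℕ) - m) = (i : ℕ); omega)
    rw [hieq]
    have hge := block_ge f m hblock i h
    omega

lemma joinPerm_inj_pair {n m : ℕ} (hm : m ≤ n) {a a' : Equiv.Perm (Fin m)}
    {b b' : Equiv.Perm (Fin (n - m))}
    (h : joinPerm m hm a b = joinPerm m hm a' b') : a = a' ∧ b = b' := by
  constructor
  · apply Equiv.ext; intro x; apply Fin.ext
    have e1 : (joinPerm m hm a b (Fin.castLE hm x) : ℕ) = (a x : ℕ) :=
      joinPerm_apply_castLT hm _ _ x _ rfl
    have e2 : (joinPerm m hm a' b' (Fin.castLE hm x) : ℕ) = (a' x : ℕ) :=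
      joinPerm_apply_castLT hm _ _ x _ rfl
    rw [← e1, ← e2, h]
  · apply Equiv.ext; intro x; apply Fin.ext
    have px : m + (x : ℕ) < n := by have := x.2; omega
    have e1 : (joinPerm m hm a b ⟨m + (x : ℕ), px⟩ : ℕ) = m + (b x : ℕ) :=
      joinPerm_apply_natAdd hm _ _ x _ rfl
    have e2 : (joinPerm m hm a' b' ⟨m + (x : ℕ), px⟩ : ℕ) = m + (b' x : ℕ) :=
      joinPerm_apply_natAdd hm _ _ x _ rfl
    rw [h] at e1
    omega

/-- If `π ∈ S_n` is separable with `a_1 < a_n`, then `π` is the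
concatenation of a block `π_A` on the letters `{1,…,m}` and a block `π_B` on the
letters `{m+1,…,n}` (0-indexed below; `σA`, `σB` are the renormalized blocks), and
`F(Λ_π, q) = F(Λ_{σ_A}, q) · F(Λ_{σ_B}, q)`. -/
theorem FLam_eq_mul_of_first_lt_last (n : ℕ) (hn : 0 < n) (π : Equiv.Perm (Fin n))
    (hsep : IsSeparable π) (hfl : π ⟨0, hn⟩ < π ⟨n - 1, by omega⟩) :
    ∃ m : ℕ, ∃ _h1 : 1 ≤ m, ∃ hmn : m < n,
      (∀ i : Fin n, (i : ℕ) < m ↔ (π i : ℕ) < m) ∧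
      ∃ σA : Equiv.Perm (Fin m), ∃ σB : Equiv.Perm (Fin (n - m)),
        (∀ i : Fin m, (σA i : ℕ) = (π ⟨i, i.2.trans hmn⟩ : ℕ)) ∧
        (∀ i : Fin (n - m),
          (σB i : ℕ) + m = (π ⟨m + i, by have := i.2; omega⟩ : ℕ)) ∧
        FLam π = FLam σA * FLam σB := by
  classical
  obtain ⟨m, h1, hmn, hcross⟩ := exists_cut n hn π hsep hfl
  have hmle : m ≤ n := hmn.le
  have hblock : ∀ i : Fin n, (i : ℕ) < m ↔ (π i : ℕ) < m := block_iff π m hmn hcross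
  have hπeq : joinPerm m hmle (restrictLow π m hmle hblock) (restrictHigh π m hmle hblock)
      = π := joinPerm_restrict π m hmle hblock
  refine ⟨m, h1, hmn, hblock, restrictLow π m hmle hblock, restrictHigh π m hmle hblock,
    ?_, ?_, ?_⟩
  · intro i
    rfl
  · intro i
    have hidx : m + (i : ℕ) < n := by have := i.2; omega
    have hge : m ≤ (π ⟨m + (i : ℕ), hidx⟩ : ℕ) := by
      refine block_ge π m hblock _ ?_
      show ¬ (m + (i : ℕ) < m)
      omega
    show (π ⟨m + (i : ℕ), hidx⟩ : ℕ) - m + m = (π ⟨m + (i : ℕ), hidx⟩ : ℕ)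
    omega
  · -- the product formula
    set σA := restrictLow π m hmle hblock with hAdef
    set σB := restrictHigh π m hmle hblock with hBdef
    have hps : (∑ p ∈ (Finset.univ.filter fun u => wle u σA) ×ˢ
          (Finset.univ.filter fun u => wle u σB),
          (X : Polynomial ℤ) ^ (invCount p.1 + invCount p.2))
        = (∑ a ∈ Finset.univ.filter fun u => wle u σA, (X : Polynomial ℤ) ^ invCount a) *
          (∑ b ∈ Finset.univ.filter fun u => wle u σB, (X : Polynomial ℤ) ^ invCount b) := by
      rw [Finset.sum_product, Finset.sum_mul_sum]
      exact Finset.sum_congr rfl fun a _ => Finset.sum_congr rfl fun b _ => pow_add _ _ _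
    have hFπ : FLam π = ∑ u ∈ Finset.univ.filter (fun u => wle u π),
        (X : Polynomial ℤ) ^ invCount u := rfl
    have hFA : FLam σA = ∑ u ∈ Finset.univ.filter (fun u => wle u σA),
        (X : Polynomial ℤ) ^ invCount u := rfl
    have hFB : FLam σB = ∑ u ∈ Finset.univ.filter (fun u => wle u σB),
        (X : Polynomial ℤ) ^ invCount u := rfl
    rw [hFπ, hFA, hFB, ← hps]
    refine (Finset.sum_bij
      (fun (p : Equiv.Perm (Fin m) × Equiv.Perm (Fin (n - m)))
        (_ : p ∈ (Finset.univ.filter fun u => wle u σA) ×ˢ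
          (Finset.univ.filter fun u => wle u σB)) => joinPerm m hmle p.1 p.2)
      ?_ ?_ ?_ ?_).symm
    · intro p hp
      rw [Finset.mem_product] at hp
      simp only [Finset.mem_filter, Finset.mem_univ, true_and] at hp ⊢
      rw [← hπeq]
      exact (wle_joinPerm hmle p.1 σA p.2 σB).mpr ⟨hp.1, hp.2⟩
    · intro p1 hp1 p2 hp2 he
      have h2 := joinPerm_inj_pair hmle he
      exact Prod.ext h2.1 h2.2
    · intro u hu
      simp only [Finset.mem_filter, Finset.mem_univ, true_and] at hu
      have H := (wle_iff u π).mp hu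
      have hwcross : ∀ i j : Fin n, (i : ℕ) < m → m ≤ (j : ℕ) →
          (u⁻¹ * π) i < (u⁻¹ * π) j := by
        intro i j hi hj
        have hij : i < j := Fin.lt_def.mpr (by omega)
        by_contra hc
        have hne : (u⁻¹ * π) i ≠ (u⁻¹ * π) j := fun he => by
          have h3 := (u⁻¹ * π).injective he
          rw [h3] at hi
          omega
        have hlt : (u⁻¹ * π) j < (u⁻¹ * π) i :=
          lt_of_le_of_ne (not_lt.mp hc) (Ne.symm hne)
        exact absurd (H i j hij hlt) (asymm (hcross i j hi hj))
      have hwblock := block_iff (u⁻¹ * π) m hmn hwcross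
      have hublock : ∀ i : Fin n, (i : ℕ) < m ↔ (u i : ℕ) < m := by
        intro i
        have hgr : π * (u⁻¹ * π)⁻¹ = u := by group
        have hui : u i = π ((u⁻¹ * π)⁻¹ i) := by
          conv_lhs => rw [← hgr]
          rfl
        have h2 := hwblock ((u⁻¹ * π)⁻¹ i)
        rw [show (u⁻¹ * π) ((u⁻¹ * π)⁻¹ i) = i from (u⁻¹ * π).apply_symm_apply i] at h2
        rw [hui]
        exact h2.symm.trans (hblock ((u⁻¹ * π)⁻¹ i))
      refine ⟨(restrictLow u m hmle hublock, restrictHigh u m hmle hublock), ?_, ?_⟩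
      · rw [Finset.mem_product]
        simp only [Finset.mem_filter, Finset.mem_univ, true_and]
        have hjoin := joinPerm_restrict u m hmle hublock
        have hu2 := hu
        rw [← hjoin, ← hπeq] at hu2
        exact (wle_joinPerm hmle _ σA _ σB).mp hu2
      · exact joinPerm_restrict u m hmle hublock
    · intro p hp
      rw [invCount_joinPerm hmle p.1 p.2, pow_add]

end SepPerm
end

section
/- Let π = a_1a_2⋯a_n ∈ S_n be 231-avoiding. For 1 ≤ i ≤ n, let c_i be defined by: a_{c_i+i} is the first letter to the right of a_i in the one-line notation of π with a_{c_i+i} > a_i, with the convention a_{n+1} = ∞ (so c_i = min{ j − i : i < j ≤ n+1, a_j > a_i }). Then F(Λ_π, q) = Π_{i=1}^{n} [c_i], where [k] = 1 + q + ⋯ + q^{k−1}. -/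
open Polynomial

namespace SepPerm

/-- `c_i` for `π = a_1 ⋯ a_n`: the distance from position `i` to the first position
to its right holding a larger letter, with the convention `a_{n+1} = ∞` (0-indexed:
if no `j > i` has `a_j > a_i`, then `c_i = n - i`). -/
def cval {n : ℕ} (π : Equiv.Perm (Fin n)) (i : Fin n) : ℕ :=
  (insert (n - (i : ℕ))
      ((Finset.univ.filter fun j : Fin n => i < j ∧ π i < π j).image
        fun j : Fin n => (j : ℕ) - (i : ℕ))).min' (Finset.insert_nonempty _ _)

open Equiv Finset

variable {n : ℕ}

def VInvSet (w : Perm (Fin n)) : Finset (Fin n × Fin n) :=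
  Finset.univ.filter fun q : Fin n × Fin n => q.1 < q.2 ∧ w⁻¹ q.2 < w⁻¹ q.1

lemma mem_VInvSet {w : Perm (Fin n)} {q : Fin n × Fin n} :
    q ∈ VInvSet w ↔ q.1 < q.2 ∧ w⁻¹ q.2 < w⁻¹ q.1 := by
  simp [VInvSet]

lemma invCount_eq_card_vinv (w : Perm (Fin n)) : invCount w = (VInvSet w).card := by
  refine Finset.card_nbij' (fun q => (w q.2, w q.1)) (fun q => (w⁻¹ q.2, w⁻¹ q.1)) ?_ ?_ ?_ ?_
  · intro q hq
    simp only [mem_coe, mem_filter, mem_univ, true_and] at hq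
    simpa [mem_VInvSet] using ⟨hq.2, hq.1⟩
  · intro q hq
    rw [mem_coe, mem_VInvSet] at hq
    simp only [mem_coe, mem_filter, mem_univ, true_and]
    exact ⟨hq.2, by simpa using hq.1⟩
  · intro q hq; simp
  · intro q hq; simp

lemma invCount_inv_mul (u v : Perm (Fin n)) :
    invCount (u⁻¹ * v) = ((VInvSet u \ VInvSet v) ∪ (VInvSet v \ VInvSet u)).card := by
  rw [invCount_eq_card_vinv]
  refine Finset.card_nbij'
    (fun q => if u q.1 < u q.2 then (u q.1, u q.2) else (u q.2, u q.1))
    (fun q => if u⁻¹ q.1 < u⁻¹ q.2 then (u⁻¹ q.1, u⁻¹ q.2) else (u⁻¹ q.2, u⁻¹ q.1))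
    ?_ ?_ ?_ ?_
  · rintro ⟨a, b⟩ hq
    rw [mem_coe, mem_VInvSet] at hq
    obtain ⟨hab, hvu⟩ := hq
    simp only [mul_inv_rev, inv_inv, Perm.mul_apply] at hvu
    simp only at hab hvu
    have hne : u a ≠ u b := fun h => absurd (u.injective h) hab.ne
    dsimp only
    rcases lt_or_gt_of_ne hne with h1 | h1
    · rw [if_pos h1]
      simp only [mem_coe, mem_union, mem_sdiff, mem_VInvSet, Perm.inv_def, Equiv.symm_apply_apply]
      exact Or.inr ⟨⟨h1, hvu⟩, fun hc => absurd hc.2 hab.asymm⟩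
    · rw [if_neg (not_lt_of_gt h1)]
      simp only [mem_coe, mem_union, mem_sdiff, mem_VInvSet, Perm.inv_def, Equiv.symm_apply_apply]
      exact Or.inl ⟨⟨h1, hab⟩, fun hc => absurd hc.2 hvu.asymm⟩
  · rintro ⟨x, y⟩ hq
    simp only [mem_coe, mem_union, mem_sdiff, mem_VInvSet] at hq
    rw [mem_coe, mem_VInvSet]
    simp only [mul_inv_rev, inv_inv, Perm.mul_apply]
    rcases hq with ⟨⟨hxy, hu⟩, hnv⟩ | ⟨⟨hxy, hv⟩, hnu⟩
    · have hv' : v⁻¹ x < v⁻¹ y := by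
        rcases lt_or_gt_of_ne (fun h : v⁻¹ x = v⁻¹ y => absurd (v.symm.injective h) hxy.ne)
          with h | h
        · exact h
        · exact absurd ⟨hxy, h⟩ hnv
      rw [if_neg (not_lt_of_gt hu)]
      simpa using ⟨hu, hv'⟩
    · have hu' : u⁻¹ x < u⁻¹ y := by
        rcases lt_or_gt_of_ne (fun h : u⁻¹ x = u⁻¹ y => absurd (u.symm.injective h) hxy.ne)
          with h | h
        · exact h
        · exact absurd ⟨hxy, h⟩ hnu
      rw [if_pos hu']
      simpa using ⟨hu', hv⟩
  · rintro ⟨a, b⟩ hq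
    rw [mem_coe, mem_VInvSet] at hq
    obtain ⟨hab, _⟩ := hq
    simp only at hab
    have hne : u a ≠ u b := fun h => absurd (u.injective h) hab.ne
    dsimp only
    rcases lt_or_gt_of_ne hne with h1 | h1
    · rw [if_pos h1]; simp [hab]
    · rw [if_neg (not_lt_of_gt h1)]
      simp [hab.asymm, not_lt_of_gt hab]
  · rintro ⟨x, y⟩ hq
    simp only [mem_coe, mem_union, mem_sdiff, mem_VInvSet] at hq
    have hxy : x < y := by rcases hq with ⟨⟨h, _⟩, _⟩ | ⟨⟨h, _⟩, _⟩ <;> exact h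
    have hne : u⁻¹ x ≠ u⁻¹ y := fun h => absurd (u.symm.injective h) hxy.ne
    dsimp only
    rcases lt_or_gt_of_ne hne with h1 | h1
    · rw [if_pos h1]; simp [hxy]
    · rw [if_neg (not_lt_of_gt h1)]; simp [hxy.asymm]
  
lemma wle_iff_s16 {u v : Perm (Fin n)} : wle u v ↔ VInvSet u ⊆ VInvSet v := by
  unfold wle
  rw [invCount_eq_card_vinv u, invCount_eq_card_vinv v, invCount_inv_mul]
  set A := VInvSet u
  set B := VInvSet v
  have hdisj : Disjoint (A \ B) (B \ A) := disjoint_sdiff_sdiff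
  rw [Finset.card_union_of_disjoint hdisj]
  have h1 : (A \ B).card + (A ∩ B).card = A.card := by
    rw [← Finset.card_union_of_disjoint (Finset.disjoint_sdiff_inter A B),
      Finset.sdiff_union_inter]
  have h2 : (B \ A).card + (B ∩ A).card = B.card := by
    rw [← Finset.card_union_of_disjoint (Finset.disjoint_sdiff_inter B A),
      Finset.sdiff_union_inter]
  have h3 : (A ∩ B).card = (B ∩ A).card := by rw [Finset.inter_comm]
  constructor
  · intro h
    have : (A \ B).card = 0 := by omega
    rw [← Finset.sdiff_eq_empty_iff_subset]
    exact Finset.card_eq_zero.mp this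
  · intro h
    have : (A \ B).card = 0 := Finset.card_eq_zero.mpr (Finset.sdiff_eq_empty_iff_subset.mpr h)
    omega



/-- number of values smaller than `a` appearing after `a` -/
def dcode (u : Perm (Fin n)) (a : Fin n) : ℕ :=
  (Finset.univ.filter fun b => b < a ∧ u⁻¹ a < u⁻¹ b).card

lemma sum_dcode (u : Perm (Fin n)) : ∑ a, dcode u a = invCount u := by
  rw [invCount_eq_card_vinv,
    Finset.card_eq_sum_card_fiberwise (f := fun q : Fin n × Fin n => q.2)
      (t := Finset.univ) (fun x _ => Finset.mem_univ _)]
  refine Finset.sum_congr rfl fun a _ => ?_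
  rw [dcode]
  refine (Finset.card_nbij'
    (s := Finset.univ.filter fun b => b < a ∧ u⁻¹ a < u⁻¹ b)
    (t := (VInvSet u).filter fun q => q.2 = a) (fun b => (b, a)) (fun q => q.1) ?_ ?_ ?_ ?_)
  · intro b hb
    simp only [mem_coe, mem_filter, mem_univ, true_and, Perm.inv_def] at hb
    simp [mem_VInvSet, hb.1, hb.2]
  · intro q hq
    simp only [mem_coe, mem_filter, mem_VInvSet] at hq
    obtain ⟨⟨h1, h2⟩, h3⟩ := hq
    subst h3
    simp only [mem_coe, mem_filter, mem_univ, true_and]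
    exact ⟨h1, h2⟩
  · intro b _; rfl
  · intro q hq
    simp only [mem_coe, mem_filter, mem_VInvSet] at hq
    obtain ⟨⟨_, _⟩, h3⟩ := hq
    exact Prod.ext rfl h3.symm

lemma card_filter_le (p : ℕ) :
    ((Finset.univ : Finset (Fin n)).filter fun j : Fin n => p ≤ (j : ℕ)).card = n - p := by
  rw [← Nat.card_Ico p n]
  refine Finset.card_bij' (fun j _ => (j : ℕ)) (fun m hm => ⟨m, (Finset.mem_Ico.mp hm).2⟩)
    ?_ ?_ ?_ ?_
  · intro j hj
    simp only [mem_filter, mem_univ, true_and] at hj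
    exact Finset.mem_Ico.mpr ⟨hj, j.isLt⟩
  · intro m hm
    simp only [mem_filter, mem_univ, true_and]
    exact (Finset.mem_Ico.mp hm).1
  · intro j _; simp
  · intro m _; simp

lemma card_filter_lt (x : ℕ) :
    ((Finset.univ : Finset (Fin n)).filter fun j : Fin n => x < (j : ℕ)).card = n - (x + 1) := by
  rw [← card_filter_le (n := n) (x + 1)]
  rfl

/-- Insert the value `Fin.last n` at position `p`, shifting `σ` appropriately:
position `p.succAbove j` receives value `(σ j).castSucc`. -/
def ins (σ : Perm (Fin n)) (p : Fin (n + 1)) : Perm (Fin (n + 1)) :=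
  ((finSuccEquiv' p).trans (Equiv.optionCongr σ)).trans finSuccEquivLast.symm

lemma ins_apply_self (σ : Perm (Fin n)) (p : Fin (n + 1)) : ins σ p p = Fin.last n := by
  simp [ins, finSuccEquiv'_at, finSuccEquivLast_symm_none]

lemma ins_apply_succAbove (σ : Perm (Fin n)) (p : Fin (n + 1)) (j : Fin n) :
    ins σ p (p.succAbove j) = (σ j).castSucc := by
  simp [ins, finSuccEquiv'_succAbove, finSuccEquivLast_symm_some]

lemma ins_inv_last (σ : Perm (Fin n)) (p : Fin (n + 1)) : (ins σ p)⁻¹ (Fin.last n) = p := by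
  rw [Equiv.Perm.inv_eq_iff_eq, ins_apply_self]


lemma ins_inv_castSucc (σ : Perm (Fin n)) (p : Fin (n + 1)) (b : Fin n) :
    (ins σ p)⁻¹ b.castSucc = p.succAbove (σ⁻¹ b) := by
  rw [Equiv.Perm.inv_eq_iff_eq, ins_apply_succAbove]
  simp

lemma ins_injective :
    Function.Injective fun q : Perm (Fin n) × Fin (n + 1) => ins q.1 q.2 := by
  rintro ⟨σ, p⟩ ⟨σ', p'⟩ h
  simp only at h
  have hp : p = p' := by
    rw [← ins_inv_last σ p, ← ins_inv_last σ' p', h]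
  subst hp
  have hσ : σ = σ' := by
    ext j
    have := congrArg (fun w : Perm (Fin (n+1)) => w (p.succAbove j)) h
    simp only [ins_apply_succAbove] at this
    exact congrArg Fin.val (Fin.castSucc_injective n this)
  rw [hσ]

lemma ins_bijective :
    Function.Bijective fun q : Perm (Fin n) × Fin (n + 1) => ins q.1 q.2 := by
  rw [Fintype.bijective_iff_injective_and_card]
  refine ⟨ins_injective, ?_⟩
  simp [Fintype.card_perm, Nat.factorial_succ, Nat.mul_comm]

lemma dcode_ins_last (σ : Perm (Fin n)) (p : Fin (n + 1)) :
    dcode (ins σ p) (Fin.last n) = n - (p : ℕ) := by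
  rw [dcode, ← card_filter_le (n := n) (p : ℕ)]
  refine Finset.card_bij' (fun b hb => σ⁻¹ (b.castPred ?_)) (fun j _ => (σ j).castSucc)
    ?_ ?_ ?_ ?_
  · simp only [mem_filter, mem_univ, true_and] at hb
    exact Fin.ne_last_of_lt hb.1
  · intro b hb
    simp only [mem_filter, mem_univ, true_and] at hb ⊢
    obtain ⟨hbl, hpos⟩ := hb
    rw [ins_inv_last] at hpos
    have hcast : b = (b.castPred (Fin.ne_last_of_lt hbl)).castSucc := by simp
    rw [hcast, ins_inv_castSucc] at hpos
    rw [Fin.lt_succAbove_iff_le_castSucc] at hpos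
    simpa [Fin.le_def] using hpos
  · intro j hj
    simp only [mem_filter, mem_univ, true_and] at hj ⊢
    refine ⟨Fin.castSucc_lt_last _, ?_⟩
    rw [ins_inv_last, ins_inv_castSucc]
    simp only [Perm.inv_def, Equiv.symm_apply_apply]
    rw [Fin.lt_succAbove_iff_le_castSucc]
    simpa [Fin.le_def] using hj
  · intro b hb; simp
  · intro j hj; simp

lemma dcode_ins_castSucc (σ : Perm (Fin n)) (p : Fin (n + 1)) (a : Fin n) :
    dcode (ins σ p) a.castSucc = dcode σ a := by
  rw [dcode, dcode]
  refine Finset.card_bij' (fun b hb => b.castPred ?_) (fun c _ => c.castSucc) ?_ ?_ ?_ ?_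
  · simp only [mem_filter, mem_univ, true_and] at hb
    exact Fin.ne_last_of_lt (lt_of_lt_of_le hb.1 (Fin.castSucc_lt_last a).le)
  · intro b hb
    simp only [mem_filter, mem_univ, true_and] at hb ⊢
    obtain ⟨hba, hpos⟩ := hb
    have hne := Fin.ne_last_of_lt (lt_of_lt_of_le hba (Fin.castSucc_lt_last a).le)
    have hcast : b = (b.castPred hne).castSucc := by simp
    rw [hcast, ins_inv_castSucc, ins_inv_castSucc] at hpos
    constructor
    · rw [hcast, Fin.castSucc_lt_castSucc_iff] at hba; exact hba
    · exact (Fin.strictMono_succAbove p).lt_iff_lt.mp hpos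
  · intro c hc
    simp only [mem_filter, mem_univ, true_and] at hc ⊢
    obtain ⟨hca, hpos⟩ := hc
    refine ⟨by simpa [Fin.castSucc_lt_castSucc_iff] using hca, ?_⟩
    rw [ins_inv_castSucc, ins_inv_castSucc]
    exact (Fin.strictMono_succAbove p).lt_iff_lt.mpr hpos
  · intro b hb; simp
  · intro c hc; simp

lemma invCount_ins (σ : Perm (Fin n)) (p : Fin (n + 1)) :
    invCount (ins σ p) = invCount σ + (n - (p : ℕ)) := by
  rw [← sum_dcode, ← sum_dcode, Fin.sum_univ_castSucc]
  congr 1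
  · exact Finset.sum_congr rfl fun a _ => dcode_ins_castSucc σ p a
  · exact dcode_ins_last σ p

lemma vinv_castSucc_mem (σ : Perm (Fin n)) (p : Fin (n + 1)) (b a : Fin n) :
    (b.castSucc, a.castSucc) ∈ VInvSet (ins σ p) ↔ (b, a) ∈ VInvSet σ := by
  rw [mem_VInvSet, mem_VInvSet]
  simp only [ins_inv_castSucc]
  rw [Fin.castSucc_lt_castSucc_iff]
  exact and_congr Iff.rfl (Fin.strictMono_succAbove p).lt_iff_lt

lemma vinv_last_mem (σ : Perm (Fin n)) (p : Fin (n + 1)) (b : Fin n) :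
    (b.castSucc, Fin.last n) ∈ VInvSet (ins σ p) ↔ (p : ℕ) ≤ ((σ⁻¹ b : Fin n) : ℕ) := by
  rw [mem_VInvSet]
  simp only [ins_inv_last, ins_inv_castSucc]
  rw [Fin.lt_succAbove_iff_le_castSucc]
  constructor
  · intro h; simpa [Fin.le_def] using h.2
  · intro h; exact ⟨Fin.castSucc_lt_last _, by simpa [Fin.le_def] using h⟩

lemma vinv_subset_ins_iff (σ τ : Perm (Fin n)) (p m : Fin (n + 1))
    (hLH : ∀ j j' : Fin n, (j : ℕ) < (m : ℕ) → (m : ℕ) ≤ (j' : ℕ) → τ j < τ j') :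
    VInvSet (ins σ p) ⊆ VInvSet (ins τ m) ↔
      (VInvSet σ ⊆ VInvSet τ ∧ (m : ℕ) ≤ (p : ℕ)) := by
  constructor
  · intro h
    constructor
    · rintro ⟨b, a⟩ hba
      exact (vinv_castSucc_mem τ m b a).mp (h ((vinv_castSucc_mem σ p b a).mpr hba))
    · have hd : dcode (ins σ p) (Fin.last n) ≤ dcode (ins τ m) (Fin.last n) := by
        rw [dcode, dcode]
        refine Finset.card_le_card fun b hb => ?_
        simp only [mem_filter, mem_univ, true_and] at hb ⊢
        have : (b, Fin.last n) ∈ VInvSet (ins τ m) :=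
          h (mem_VInvSet.mpr ⟨hb.1, hb.2⟩)
        rw [mem_VInvSet] at this
        exact ⟨this.1, this.2⟩
      rw [dcode_ins_last, dcode_ins_last] at hd
      have hp := Fin.is_le p
      have hm := Fin.is_le m
      omega
  · rintro ⟨hsub, hmp⟩
    rintro ⟨x, y⟩ hxy
    rw [mem_VInvSet] at hxy
    obtain ⟨h1, h2⟩ := hxy
    simp only at h1 h2
    by_cases hy : y = Fin.last n
    · subst hy
      obtain ⟨b, rfl⟩ := Fin.exists_castSucc_eq.mpr (Fin.ne_last_of_lt h1)
      have hpb : (p : ℕ) ≤ ((σ⁻¹ b : Fin n) : ℕ) :=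
        (vinv_last_mem σ p b).mp (mem_VInvSet.mpr ⟨h1, h2⟩)
      rw [vinv_last_mem]
      by_contra hlt
      push_neg at hlt
      -- counting argument
      have hcardH :
          ((Finset.univ : Finset (Fin n)).filter
            fun h : Fin n => (m : ℕ) ≤ ((τ⁻¹ h : Fin n) : ℕ)).card = n - (m : ℕ) := by
        rw [← card_filter_le (n := n) (m : ℕ)]
        refine Finset.card_nbij' (fun h => τ⁻¹ h) (fun j => τ j) ?_ ?_ ?_ ?_ <;>
          intro z hz <;> simp only [mem_coe, mem_filter, mem_univ, true_and, Perm.inv_def] at hz ⊢ <;> simp [hz]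
      have hmaps : ∀ h ∈ (Finset.univ : Finset (Fin n)).filter
          (fun h : Fin n => (m : ℕ) ≤ ((τ⁻¹ h : Fin n) : ℕ)),
          σ⁻¹ h ∈ (Finset.univ : Finset (Fin n)).filter
            (fun j : Fin n => ((σ⁻¹ b : Fin n) : ℕ) < (j : ℕ)) := by
        intro hval hmem
        simp only [mem_filter, mem_univ, true_and] at hmem ⊢
        have hbh : b < hval := by
          have := hLH (τ⁻¹ b) (τ⁻¹ hval) hlt hmem
          simpa using this
        have hnotτ : (b, hval) ∉ VInvSet τ := by
          rw [mem_VInvSet]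
          rintro ⟨-, hc⟩
          simp only at hc
          rw [Fin.lt_def] at hc
          omega
        have hnotσ : (b, hval) ∉ VInvSet σ := fun hc => hnotτ (hsub hc)
        rw [mem_VInvSet] at hnotσ
        simp only [not_and] at hnotσ
        have hne : σ⁻¹ hval ≠ σ⁻¹ b := fun hc =>
          absurd (σ.symm.injective hc) hbh.ne'
        have := hnotσ hbh
        rcases lt_or_gt_of_ne hne with hc | hc
        · exact absurd hc this
        · exact Fin.lt_def.mp hc
      have hinj : Set.InjOn (fun h => σ⁻¹ h)
          ((Finset.univ : Finset (Fin n)).filter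
            fun h : Fin n => (m : ℕ) ≤ ((τ⁻¹ h : Fin n) : ℕ)) := by
        intro z1 _ z2 _ hz
        exact σ.symm.injective hz
      have hle := Finset.card_le_card_of_injOn _ hmaps hinj
      rw [hcardH, card_filter_lt] at hle
      have h1 : ((σ⁻¹ b : Fin n) : ℕ) < n := Fin.is_lt _
      omega
    · obtain ⟨a, rfl⟩ := Fin.exists_castSucc_eq.mpr hy
      obtain ⟨b, rfl⟩ := Fin.exists_castSucc_eq.mpr
        (Fin.ne_last_of_lt (lt_trans h1 (Fin.castSucc_lt_last a)))
      refine (vinv_castSucc_mem τ m b a).mpr (hsub ?_)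
      refine (vinv_castSucc_mem σ p b a).mp (mem_VInvSet.mpr ⟨h1, h2⟩)

lemma cval_le_boundary {N : ℕ} (π : Perm (Fin N)) (i : Fin N) :
    cval π i ≤ N - (i : ℕ) :=
  Finset.min'_le _ _ (Finset.mem_insert_self _ _)

lemma cval_le_of {N : ℕ} (π : Perm (Fin N)) {i j : Fin N}
    (h1 : i < j) (h2 : π i < π j) : cval π i ≤ (j : ℕ) - (i : ℕ) :=
  Finset.min'_le _ _ (Finset.mem_insert_of_mem
    (Finset.mem_image_of_mem _ (Finset.mem_filter.mpr ⟨Finset.mem_univ _, h1, h2⟩)))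

lemma cval_mem {N : ℕ} (π : Perm (Fin N)) (i : Fin N) :
    cval π i = N - (i : ℕ) ∨
      ∃ j, i < j ∧ π i < π j ∧ cval π i = (j : ℕ) - (i : ℕ) := by
  have h := Finset.min'_mem _ (Finset.insert_nonempty (N - (i : ℕ))
    ((Finset.univ.filter fun j : Fin N => i < j ∧ π i < π j).image
      fun j : Fin N => (j : ℕ) - (i : ℕ)))
  rw [Finset.mem_insert] at h
  rcases h with h | h
  · exact Or.inl h
  · rw [Finset.mem_image] at h
    obtain ⟨j, hj, hje⟩ := h
    rw [Finset.mem_filter] at hj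
    exact Or.inr ⟨j, hj.2.1, hj.2.2, hje.symm⟩

lemma succAbove_val (m : Fin (n + 1)) (j : Fin n) :
    ((m.succAbove j : Fin (n + 1)) : ℕ) =
      if (j : ℕ) < (m : ℕ) then (j : ℕ) else (j : ℕ) + 1 := by
  rcases lt_or_ge (j.castSucc) m with h | h
  · rw [Fin.succAbove_of_castSucc_lt _ _ h, if_pos (by simpa [Fin.lt_def] using h)]
    simp
  · rw [Fin.succAbove_of_le_castSucc _ _ h,
      if_neg (by simpa [Fin.le_def, not_lt] using h)]
    simp

lemma cval_ins_self (τ : Perm (Fin n)) (m : Fin (n + 1)) :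
    cval (ins τ m) m = (n + 1) - (m : ℕ) := by
  have hfe : (Finset.univ.filter fun j : Fin (n + 1) =>
      m < j ∧ ins τ m m < ins τ m j) = ∅ := by
    rw [Finset.filter_eq_empty_iff]
    rintro j -
    rintro ⟨-, hc⟩
    rw [ins_apply_self] at hc
    exact absurd hc (Fin.le_last _).not_gt
  rw [cval]
  apply le_antisymm
  · exact Finset.min'_le _ _ (Finset.mem_insert_self _ _)
  · apply Finset.le_min'
    intro y hy
    rw [Finset.mem_insert] at hy
    rcases hy with rfl | hy
    · exact le_refl _
    · rw [hfe, Finset.image_empty] at hy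
      exact absurd hy (Finset.notMem_empty _)

lemma cval_ins_succAbove (τ : Perm (Fin n)) (m : Fin (n + 1))
    (hLH : ∀ j j' : Fin n, (j : ℕ) < (m : ℕ) → (m : ℕ) ≤ (j' : ℕ) → τ j < τ j')
    (j : Fin n) :
    cval (ins τ m) (m.succAbove j) = cval τ j := by
  set π := ins τ m with hπ
  set i := m.succAbove j with hi
  have hival : (i : ℕ) = if (j : ℕ) < (m : ℕ) then (j : ℕ) else (j : ℕ) + 1 :=
    succAbove_val m j
  have hπi : π i = (τ j).castSucc := ins_apply_succAbove τ m j
  have hjn : (j : ℕ) < n := j.is_lt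
  have hmn : (m : ℕ) ≤ n := Fin.is_le m
  apply le_antisymm
  · -- cval π i ≤ cval τ j
    rcases cval_mem τ j with hb | ⟨j', hjj', hτ, heq⟩
    · rw [hb]
      by_cases hjm : (j : ℕ) < (m : ℕ)
      · have him : i < m := by rw [Fin.lt_def, hival, if_pos hjm]; exact hjm
        have hπm : π i < π m := by
          rw [hπi, ins_apply_self]; exact Fin.castSucc_lt_last _
        have := cval_le_of π him hπm
        have : cval π i ≤ (m : ℕ) - (j : ℕ) := by
          rwa [hival, if_pos hjm] at this
        omega
      · have := cval_le_boundary π i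
        rw [hival, if_neg hjm] at this
        omega
    · rw [heq]
      by_cases hjm : (j : ℕ) < (m : ℕ)
      · by_cases hj'm : (j' : ℕ) < (m : ℕ)
        · have hk : π (m.succAbove j') = (τ j').castSucc := ins_apply_succAbove τ m j'
          have hik : i < m.succAbove j' :=
            (Fin.strictMono_succAbove m) hjj'
          have hv : π i < π (m.succAbove j') := by
            rw [hπi, hk, Fin.castSucc_lt_castSucc_iff]; exact hτ
          have := cval_le_of π hik hv
          rw [hival, if_pos hjm, succAbove_val, if_pos hj'm] at this
          exact this
        · -- j < m ≤ j' : use k := m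
          have him : i < m := by rw [Fin.lt_def, hival, if_pos hjm]; exact hjm
          have hπm : π i < π m := by
            rw [hπi, ins_apply_self]; exact Fin.castSucc_lt_last _
          have := cval_le_of π him hπm
          rw [hival, if_pos hjm] at this
          have hjj'v : (j : ℕ) < (j' : ℕ) := hjj'
          omega
      · have hj'm : ¬ (j' : ℕ) < (m : ℕ) := by
          have : (j : ℕ) < (j' : ℕ) := hjj'
          omega
        have hk : π (m.succAbove j') = (τ j').castSucc := ins_apply_succAbove τ m j'
        have hik : i < m.succAbove j' := (Fin.strictMono_succAbove m) hjj'
        have hv : π i < π (m.succAbove j') := by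
          rw [hπi, hk, Fin.castSucc_lt_castSucc_iff]; exact hτ
        have := cval_le_of π hik hv
        rw [hival, if_neg hjm, succAbove_val, if_neg hj'm] at this
        have hjj'v : (j : ℕ) < (j' : ℕ) := hjj'
        omega
  · -- cval τ j ≤ cval π i
    rcases cval_mem π i with hb | ⟨k, hik, hπk, heq⟩
    · rw [hb]
      have := cval_le_boundary τ j
      by_cases hjm : (j : ℕ) < (m : ℕ)
      · rw [hival, if_pos hjm]; omega
      · rw [hival, if_neg hjm]; omega
    · rw [heq]
      by_cases hkm : k = m
      · rw [hkm]
        rw [hkm] at hik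
        have hjm : (j : ℕ) < (m : ℕ) := by
          rw [Fin.lt_def, hival] at hik
          by_cases h : (j : ℕ) < (m : ℕ)
          · exact h
          · rw [if_neg h] at hik; omega
        rw [hival, if_pos hjm]
        by_cases hmn' : (m : ℕ) = n
        · have := cval_le_boundary τ j
          omega
        · have hmn'' : (m : ℕ) < n := lt_of_le_of_ne hmn hmn'
          set j'' : Fin n := ⟨(m : ℕ), hmn''⟩ with hj''
          have hτ'' : τ j < τ j'' := hLH j j'' hjm (le_refl _)
          have hjj'' : j < j'' := by rw [Fin.lt_def]; exact hjm
          have := cval_le_of τ hjj'' hτ''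
          simpa using this
      · obtain ⟨j', hj'⟩ := Fin.exists_succAbove_eq hkm
        subst hj'
        have hπk' : π (m.succAbove j') = (τ j').castSucc := ins_apply_succAbove τ m j'
        have hτ : τ j < τ j' := by
          rw [hπi, hπk', Fin.castSucc_lt_castSucc_iff] at hπk
          exact hπk
        have hjj' : j < j' := (Fin.strictMono_succAbove m).lt_iff_lt.mp hik
        have hle := cval_le_of τ hjj' hτ
        have hkv := succAbove_val m j'
        have hjj'v : (j : ℕ) < (j' : ℕ) := hjj'
        by_cases hjm : (j : ℕ) < (m : ℕ)
        · rw [hival, if_pos hjm]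
          by_cases hj'm : (j' : ℕ) < (m : ℕ)
          · rw [hkv, if_pos hj'm]; omega
          · rw [hkv, if_neg hj'm]; omega
        · have hj'm : ¬ (j' : ℕ) < (m : ℕ) := by omega
          rw [hival, if_neg hjm, hkv, if_neg hj'm]
          omega

lemma str_lemma (π : Perm (Fin (n + 1)))
    (h231 : ¬ ∃ i j k : Fin (n + 1), i < j ∧ j < k ∧ π k < π i ∧ π i < π j)
    {m i k : Fin (n + 1)} (hm : π m = Fin.last n) (him : i < m) (hmk : m < k) :
    π i < π k := by
  by_contra hc
  push_neg at hc
  have hne : π k ≠ π i := fun h => (him.trans hmk).ne' (π.injective h)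
  have hki : π k < π i := lt_of_le_of_ne hc hne
  have hil : π i < Fin.last n :=
    Fin.lt_last_iff_ne_last.mpr fun h => him.ne (π.injective (h.trans hm.symm))
  exact h231 ⟨i, m, k, him, hmk, hki, by rw [hm]; exact hil⟩

lemma hLH_of (τ : Perm (Fin n)) (m : Fin (n + 1))
    (h231 : ¬ ∃ i j k : Fin (n + 1), i < j ∧ j < k ∧
      (ins τ m) k < (ins τ m) i ∧ (ins τ m) i < (ins τ m) j) :
    ∀ j j' : Fin n, (j : ℕ) < (m : ℕ) → (m : ℕ) ≤ (j' : ℕ) → τ j < τ j' := by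
  intro j j' h1 h2
  have hm : (ins τ m) m = Fin.last n := ins_apply_self τ m
  have hcast : (j.castSucc : Fin (n + 1)) < m := by
    rw [Fin.lt_def]; simpa using h1
  have hi : ins τ m j.castSucc = (τ j).castSucc := by
    rw [← Fin.succAbove_of_castSucc_lt m j hcast, ins_apply_succAbove]
  have hk : m < m.succAbove j' := (Fin.lt_succAbove_iff_le_castSucc m j').mpr
    (by rw [Fin.le_def]; simpa using h2)
  have := str_lemma _ h231 hm hcast hk
  rw [hi, ins_apply_succAbove, Fin.castSucc_lt_castSucc_iff] at this
  exact this

lemma avoid_ins (τ : Perm (Fin n)) (m : Fin (n + 1))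
    (h231 : ¬ ∃ i j k : Fin (n + 1), i < j ∧ j < k ∧
      (ins τ m) k < (ins τ m) i ∧ (ins τ m) i < (ins τ m) j) :
    ¬ ∃ i j k : Fin n, i < j ∧ j < k ∧ τ k < τ i ∧ τ i < τ j := by
  rintro ⟨i, j, k, h1, h2, h3, h4⟩
  refine h231 ⟨m.succAbove i, m.succAbove j, m.succAbove k,
    (Fin.strictMono_succAbove m) h1, (Fin.strictMono_succAbove m) h2, ?_, ?_⟩
  · rw [ins_apply_succAbove, ins_apply_succAbove, Fin.castSucc_lt_castSucc_iff]
    exact h3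
  · rw [ins_apply_succAbove, ins_apply_succAbove, Fin.castSucc_lt_castSucc_iff]
    exact h4

lemma main_sum : ∀ (N : ℕ) (π : Perm (Fin N)),
    (¬ ∃ i j k : Fin N, i < j ∧ j < k ∧ π k < π i ∧ π i < π j) →
    ∑ u ∈ Finset.univ.filter (fun u : Perm (Fin N) => VInvSet u ⊆ VInvSet π),
        (X : Polynomial ℤ) ^ invCount u
      = ∏ i : Fin N, ∑ t ∈ Finset.range (cval π i), (X : Polynomial ℤ) ^ t := by
  intro N
  induction N with
  | zero =>
    intro π _
    have hinv : ∀ u : Perm (Fin 0), invCount u = 0 := fun u => by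
      rw [invCount]
      apply Finset.card_eq_zero.mpr
      apply Finset.eq_empty_of_forall_notMem
      intro q hq
      exact q.1.elim0
    rw [Fin.prod_univ_zero]
    have hall : ∀ u ∈ (Finset.univ : Finset (Perm (Fin 0))),
        VInvSet u ⊆ VInvSet π := fun u _ q hq => q.1.elim0
    rw [Finset.filter_true_of_mem hall]
    rw [Finset.sum_congr rfl (fun u _ => by rw [hinv u, pow_zero])]
    rw [Finset.sum_const, Finset.card_univ, Fintype.card_perm]
    simp
  | succ n IH =>
    intro π h231
    obtain ⟨⟨τ, m⟩, hins⟩ := ins_bijective.surjective π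
    simp only at hins
    subst hins
    have hLH := hLH_of τ m h231
    have hτ231 := avoid_ins τ m h231
    have hstep : ∑ u ∈ Finset.univ.filter
          (fun u : Perm (Fin (n + 1)) => VInvSet u ⊆ VInvSet (ins τ m)),
          (X : Polynomial ℤ) ^ invCount u
        = ∑ q ∈ Finset.univ.filter
            (fun q : Perm (Fin n) × Fin (n + 1) =>
              VInvSet q.1 ⊆ VInvSet τ ∧ (m : ℕ) ≤ (q.2 : ℕ)),
            (X : Polynomial ℤ) ^ (invCount q.1 + (n - (q.2 : ℕ))) := by
      refine (Finset.sum_bij (fun q _ => ins q.1 q.2) ?_ ?_ ?_ ?_).symm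
      · intro q hq
        simp only [Finset.mem_filter, Finset.mem_univ, true_and] at hq ⊢
        exact (vinv_subset_ins_iff q.1 τ q.2 m hLH).mpr hq
      · intro q1 _ q2 _ he
        exact ins_injective he
      · intro u hu
        simp only [Finset.mem_filter, Finset.mem_univ, true_and] at hu
        obtain ⟨⟨σ, p⟩, rfl⟩ := ins_bijective.surjective u
        exact ⟨(σ, p), Finset.mem_filter.mpr ⟨Finset.mem_univ _,
          (vinv_subset_ins_iff σ τ p m hLH).mp hu⟩, rfl⟩
      · intro q _
        rw [invCount_ins]
    rw [hstep]
    have hfp : (Finset.univ.filter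
          (fun q : Perm (Fin n) × Fin (n + 1) =>
            VInvSet q.1 ⊆ VInvSet τ ∧ (m : ℕ) ≤ (q.2 : ℕ)))
        = (Finset.univ.filter fun σ : Perm (Fin n) => VInvSet σ ⊆ VInvSet τ) ×ˢ
            (Finset.univ.filter fun p : Fin (n + 1) => (m : ℕ) ≤ (p : ℕ)) := by
      ext q
      simp only [Finset.mem_filter, Finset.mem_univ, true_and, Finset.mem_product]
    rw [hfp, Finset.sum_product]
    simp_rw [pow_add]
    rw [← Finset.sum_mul_sum]
    have hchain : ∑ p ∈ Finset.univ.filter (fun p : Fin (n + 1) => (m : ℕ) ≤ (p : ℕ)),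
        (X : Polynomial ℤ) ^ (n - (p : ℕ))
        = ∑ t ∈ Finset.range (n + 1 - (m : ℕ)), (X : Polynomial ℤ) ^ t := by
      refine Finset.sum_bij (fun p _ => n - (p : ℕ)) ?_ ?_ ?_ ?_
      · intro p hp
        simp only [Finset.mem_filter, Finset.mem_univ, true_and] at hp
        have := Fin.is_le p
        show n - (p : ℕ) ∈ Finset.range (n + 1 - (m : ℕ))
        rw [Finset.mem_range]
        omega
      · intro p1 h1 p2 h2 he
        simp only [Finset.mem_filter, Finset.mem_univ, true_and] at h1 h2
        have hv1 := Fin.is_le p1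
        have hv2 := Fin.is_le p2
        have he' : n - (p1 : ℕ) = n - (p2 : ℕ) := he
        exact Fin.ext (by omega)
      · intro t ht
        rw [Finset.mem_range] at ht
        have hm := Fin.is_le m
        refine ⟨⟨n - t, by omega⟩, ?_, ?_⟩
        · simp only [Finset.mem_filter, Finset.mem_univ, true_and]
          show (m : ℕ) ≤ n - t
          omega
        · show n - (n - t) = t
          omega
      · intro p _; rfl
    rw [hchain, IH τ hτ231]
    rw [Fin.prod_univ_succAbove
      (fun i => ∑ t ∈ Finset.range (cval (ins τ m) i), (X : Polynomial ℤ) ^ t) m]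
    rw [cval_ins_self]
    have : ∀ j : Fin n, cval (ins τ m) (m.succAbove j) = cval τ j :=
      cval_ins_succAbove τ m hLH
    simp only [this]
    ring


/-- For a 231-avoiding `π ∈ S_n`,
`F(Λ_π, q) = ∏_{i=1}^n [c_i]` where `[k] = 1 + q + ⋯ + q^{k-1}`. -/
theorem FLam_eq_prod_cval (n : ℕ) (π : Equiv.Perm (Fin n))
    (h231 : ¬ ∃ i j k : Fin n, i < j ∧ j < k ∧ π k < π i ∧ π i < π j) :
    FLam π = ∏ i : Fin n, ∑ t ∈ Finset.range (cval π i), (X : Polynomial ℤ) ^ t := by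
  classical
  rw [FLam]
  have hfil : (Finset.univ.filter fun u : Equiv.Perm (Fin n) => wle u π)
      = Finset.univ.filter fun u : Equiv.Perm (Fin n) => VInvSet u ⊆ VInvSet π := by
    ext u
    simp only [Finset.mem_filter, Finset.mem_univ, true_and]
    exact wle_iff_s16
  rw [hfil]
  exact main_sum n π h231

end SepPerm
end
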